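/- For all f, g ∈ C(X,ℝ): liminf_{τ → 0⁺} (β(f + τ·g) − β(f))/τ ≥ sup_{μ ∈ M_max(f)} ∫ g dμ, and limsup_{τ → 0⁻} (β(f + τ·g) − β(f))/τ ≤ inf_{μ ∈ M_max(f)} ∫ g dμ. -/

import Mathlib

open MeasureTheory Topology Filter
open scoped NNReal

variable {X : Type*} [MetricSpace X] [CompactSpace X] [Nonempty X]
  [MeasurableSpace X] [BorelSpace X]

/-- The set of `T`-invariant Borel probability measures on `X`,
equipped (as a subtype) with the weak* topology. -/
def Minv (T : X → X) : Set (ProbabilityMeasure X) :=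
  {μ | (μ : Measure X).map T = (μ : Measure X)}

/-- The integral of a continuous function against a probability measure. -/
noncomputable def intf (f : C(X, ℝ)) (μ : ProbabilityMeasure X) : ℝ :=
  ∫ x, f x ∂(μ : Measure X)

/-- The maximum ergodic average `β(f) = sup {∫ f dμ : μ ∈ M}`. -/
noncomputable def beta (T : X → X) (f : C(X, ℝ)) : ℝ :=
  sSup (intf f '' Minv T)

/-- The set of `f`-maximizing measures. -/
def MMax (T : X → X) (f : C(X, ℝ)) : Set (ProbabilityMeasure X) :=
  {μ ∈ Minv T | intf f μ = beta T f}


section BetaAuxSection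

open Set BoundedContinuousFunction TopologicalSpace
open scoped ENNReal

set_option linter.unusedSectionVars false
set_option maxHeartbeats 1000000

namespace BetaAux

variable {X : Type*} [MetricSpace X] [CompactSpace X] [Nonempty X]
  [MeasurableSpace X] [BorelSpace X]

variable (𝒰 : Ultrafilter ℕ) (μseq : ℕ → ProbabilityMeasure X)

/-- limit functional along the ultrafilter -/
noncomputable def LL (h : X →ᵇ ℝ≥0) : ℝ≥0∞ :=
  (𝒰.map fun n => ∫⁻ x, h x ∂(μseq n : Measure X)).lim

lemma tendsto_LL (h : X →ᵇ ℝ≥0) :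
    Tendsto (fun n => ∫⁻ x, h x ∂(μseq n : Measure X)) 𝒰 (𝓝 (LL 𝒰 μseq h)) :=
  Ultrafilter.le_nhds_lim _

lemma LL_eq_of_tendsto {h : X →ᵇ ℝ≥0} {x : ℝ≥0∞}
    (hx : Tendsto (fun n => ∫⁻ x, h x ∂(μseq n : Measure X)) 𝒰 (𝓝 x)) :
    LL 𝒰 μseq h = x :=
  tendsto_nhds_unique (tendsto_LL 𝒰 μseq h) hx

lemma meas_coe (h : X →ᵇ ℝ≥0) : Measurable fun x => (h x : ℝ≥0∞) := by
  exact measurable_coe_nnreal_ennreal.comp h.continuous.measurable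

lemma LL_mono {h₁ h₂ : X →ᵇ ℝ≥0} (hle : ∀ x, h₁ x ≤ h₂ x) :
    LL 𝒰 μseq h₁ ≤ LL 𝒰 μseq h₂ :=
  le_of_tendsto_of_tendsto (tendsto_LL 𝒰 μseq h₁) (tendsto_LL 𝒰 μseq h₂)
    (Eventually.of_forall fun n => lintegral_mono fun x => by
      exact ENNReal.coe_le_coe.2 (hle x))

lemma LL_add (h₁ h₂ : X →ᵇ ℝ≥0) :
    LL 𝒰 μseq (h₁ + h₂) = LL 𝒰 μseq h₁ + LL 𝒰 μseq h₂ := by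
  refine LL_eq_of_tendsto 𝒰 μseq ?_
  have : ∀ n, ∫⁻ x, ((h₁ + h₂) x : ℝ≥0∞) ∂(μseq n : Measure X)
      = ∫⁻ x, h₁ x ∂(μseq n : Measure X) + ∫⁻ x, h₂ x ∂(μseq n : Measure X) := by
    intro n
    rw [← lintegral_add_left (meas_coe h₁)]
    congr 1
  simp_rw [this]
  exact (tendsto_LL 𝒰 μseq h₁).add (tendsto_LL 𝒰 μseq h₂)

lemma LL_zero : LL 𝒰 μseq 0 = 0 := by
  refine LL_eq_of_tendsto 𝒰 μseq ?_
  have : ∀ n, ∫⁻ x, ((0 : X →ᵇ ℝ≥0) x : ℝ≥0∞) ∂(μseq n : Measure X) = 0 := by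
    intro n; simp
  simp_rw [this]; exact tendsto_const_nhds

lemma LL_smul (c : ℝ≥0) (h : X →ᵇ ℝ≥0) :
    LL 𝒰 μseq (c • h) = c * LL 𝒰 μseq h := by
  refine LL_eq_of_tendsto 𝒰 μseq ?_
  have : ∀ n, ∫⁻ x, ((c • h) x : ℝ≥0∞) ∂(μseq n : Measure X)
      = c * ∫⁻ x, h x ∂(μseq n : Measure X) := by
    intro n
    rw [← lintegral_const_mul _ (meas_coe h)]
    congr 1
  simp_rw [this]
  exact ENNReal.Tendsto.const_mul (tendsto_LL 𝒰 μseq h) (Or.inr ENNReal.coe_ne_top)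

lemma LL_one : LL 𝒰 μseq 1 = 1 := by
  refine LL_eq_of_tendsto 𝒰 μseq ?_
  have : ∀ n, ∫⁻ x, ((1 : X →ᵇ ℝ≥0) x : ℝ≥0∞) ∂(μseq n : Measure X) = 1 := by
    intro n; simp
  simp_rw [this]; exact tendsto_const_nhds

lemma LL_const (c : ℝ≥0) : LL 𝒰 μseq (c • 1) = c := by
  rw [LL_smul, LL_one, mul_one]

lemma LL_sum {ι : Type*} (s : Finset ι) (g : ι → (X →ᵇ ℝ≥0)) :
    LL 𝒰 μseq (∑ i ∈ s, g i) = ∑ i ∈ s, LL 𝒰 μseq (g i) := by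
  classical
  induction s using Finset.induction_on with
  | empty => simpa using LL_zero 𝒰 μseq
  | insert _ _ hnot ih =>
      rw [Finset.sum_insert hnot, Finset.sum_insert hnot, LL_add, ih]


/-- the Riesz content associated to `LL`. -/
noncomputable def lamK (K : Set X) : ℝ≥0∞ :=
  ⨅ (h : X →ᵇ ℝ≥0) (_ : ∀ x ∈ K, 1 ≤ h x), LL 𝒰 μseq h

lemma lamK_le {K : Set X} {h : X →ᵇ ℝ≥0} (hh : ∀ x ∈ K, 1 ≤ h x) :
    lamK 𝒰 μseq K ≤ LL 𝒰 μseq h :=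
  iInf₂_le h hh

lemma le_lamK {K : Set X} {a : ℝ≥0∞}
    (ha : ∀ h : X →ᵇ ℝ≥0, (∀ x ∈ K, 1 ≤ h x) → a ≤ LL 𝒰 μseq h) :
    a ≤ lamK 𝒰 μseq K :=
  le_iInf₂ ha

lemma lamK_le_one (K : Set X) : lamK 𝒰 μseq K ≤ 1 := by
  refine le_trans (lamK_le 𝒰 μseq (h := 1) fun x _ => le_rfl) ?_
  rw [LL_one]

lemma lamK_mono {K₁ K₂ : Set X} (h : K₁ ⊆ K₂) : lamK 𝒰 μseq K₁ ≤ lamK 𝒰 μseq K₂ :=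
  le_lamK 𝒰 μseq fun g hg => lamK_le 𝒰 μseq fun x hx => hg x (h hx)

lemma lamK_union_le (K₁ K₂ : Set X) :
    lamK 𝒰 μseq (K₁ ∪ K₂) ≤ lamK 𝒰 μseq K₁ + lamK 𝒰 μseq K₂ := by
  have H : ∀ ε : ℝ≥0∞, 0 < ε → ∀ K : Set X, ∃ h : X →ᵇ ℝ≥0,
      (∀ x ∈ K, 1 ≤ h x) ∧ LL 𝒰 μseq h ≤ lamK 𝒰 μseq K + ε := by
    intro ε hε K
    have hlt : lamK 𝒰 μseq K < lamK 𝒰 μseq K + ε :=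
      ENNReal.lt_add_right (lt_of_le_of_lt (lamK_le_one 𝒰 μseq K) ENNReal.one_lt_top).ne hε.ne'
    obtain ⟨h, hh, hle⟩ : ∃ h, ∃ (_ : ∀ x ∈ K, 1 ≤ h x), LL 𝒰 μseq h < lamK 𝒰 μseq K + ε := by
      simpa [lamK, iInf_lt_iff] using hlt
    exact ⟨h, hh, hle.le⟩
  refine ENNReal.le_of_forall_pos_le_add fun ε hε hfin => ?_
  have hε2 : (0:ℝ≥0∞) < (ε:ℝ≥0∞) / 2 :=
    ENNReal.div_pos (by exact_mod_cast hε.ne') (by norm_num)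
  obtain ⟨h₁, hh₁, hle₁⟩ := H ((ε:ℝ≥0∞) / 2) hε2 K₁
  obtain ⟨h₂, hh₂, hle₂⟩ := H ((ε:ℝ≥0∞) / 2) hε2 K₂
  have : lamK 𝒰 μseq (K₁ ∪ K₂) ≤ LL 𝒰 μseq (h₁ + h₂) := by
    refine lamK_le 𝒰 μseq fun x hx => ?_
    rcases hx with hx | hx
    · exact le_trans (hh₁ x hx) (by simp)
    · exact le_trans (hh₂ x hx) (by simp)
  refine this.trans ?_
  rw [LL_add]
  calc LL 𝒰 μseq h₁ + LL 𝒰 μseq h₂ ≤ (lamK 𝒰 μseq K₁ + ε / 2) + (lamK 𝒰 μseq K₂ + ε / 2) :=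
        add_le_add hle₁ hle₂
    _ = lamK 𝒰 μseq K₁ + lamK 𝒰 μseq K₂ + (ε / 2 + ε / 2) := by ring
    _ = lamK 𝒰 μseq K₁ + lamK 𝒰 μseq K₂ + ε := by rw [ENNReal.add_halves]

/-- a continuous `[0,1]`-valued function as a bounded `ℝ≥0`-valued function. -/
noncomputable def toNN (φ : C(X, ℝ)) (hφ : ∀ x, φ x ∈ Icc (0:ℝ) 1) : X →ᵇ ℝ≥0 :=
  mkOfCompact ⟨fun x => ⟨φ x, (hφ x).1⟩, Continuous.subtype_mk φ.continuous _⟩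

@[simp] lemma toNN_apply (φ : C(X, ℝ)) (hφ) (x : X) : (toNN φ hφ x : ℝ) = φ x := rfl

lemma toNN_le_one (φ : C(X, ℝ)) (hφ) (x : X) : toNN φ hφ x ≤ 1 := by
  have := (hφ x).2
  rw [← NNReal.coe_le_coe]; simpa using this

lemma lamK_sup_disjoint (K₁ K₂ : Set X) (hK₁ : IsClosed K₁) (hK₂ : IsClosed K₂)
    (hd : Disjoint K₁ K₂) :
    lamK 𝒰 μseq (K₁ ∪ K₂) = lamK 𝒰 μseq K₁ + lamK 𝒰 μseq K₂ := by
  refine le_antisymm (lamK_union_le 𝒰 μseq K₁ K₂) ?_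
  obtain ⟨φ, hφ0, hφ1, hφI⟩ := exists_continuous_zero_one_of_isClosed hK₁ hK₂ hd
  -- φ = 0 on K₁, φ = 1 on K₂
  refine le_lamK 𝒰 μseq fun h hh => ?_
  -- h ≥ 1 on K₁ ∪ K₂
  set ψ₂ : X →ᵇ ℝ≥0 := toNN φ hφI with hψ₂
  set ψ₁ : X →ᵇ ℝ≥0 := toNN (1 - φ) (fun x => by
      have := hφI x; constructor <;> simp <;> [linarith [this.2]; linarith [this.1]]) with hψ₁
  have key : ∀ x : X, ψ₁ x + ψ₂ x = 1 := by
    intro x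
    rw [← NNReal.coe_inj]
    push_cast
    simp [hψ₁, hψ₂]
    change (1 - φ) x + φ x = 1; simp
  -- products with h
  set g₁ : X →ᵇ ℝ≥0 := mkOfCompact ⟨fun x => ψ₁ x * h x,
    (map_continuous ψ₁).mul h.continuous⟩ with hg₁
  set g₂ : X →ᵇ ℝ≥0 := mkOfCompact ⟨fun x => ψ₂ x * h x,
    (map_continuous ψ₂).mul h.continuous⟩ with hg₂
  have hsum : g₁ + g₂ = h := by
    ext x
    simp only [hg₁, hg₂, BoundedContinuousFunction.coe_add, Pi.add_apply, mkOfCompact_apply,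
      ContinuousMap.coe_mk]
    rw [← add_mul, key x, one_mul]
  have h1 : lamK 𝒰 μseq K₁ ≤ LL 𝒰 μseq g₁ := by
    refine lamK_le 𝒰 μseq fun x hx => ?_
    have : ψ₁ x = 1 := by
      rw [← NNReal.coe_inj]; change (1 - φ) x = ((1:ℝ≥0):ℝ); simp [hφ0 hx]
    simp only [hg₁, mkOfCompact_apply, ContinuousMap.coe_mk, this, one_mul]
    exact hh x (Or.inl hx)
  have h2 : lamK 𝒰 μseq K₂ ≤ LL 𝒰 μseq g₂ := by
    refine lamK_le 𝒰 μseq fun x hx => ?_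
    have : ψ₂ x = 1 := by
      rw [← NNReal.coe_inj]; simp [hψ₂, hφ1 hx]
    simp only [hg₂, mkOfCompact_apply, ContinuousMap.coe_mk, this, one_mul]
    exact hh x (Or.inr hx)
  calc lamK 𝒰 μseq K₁ + lamK 𝒰 μseq K₂ ≤ LL 𝒰 μseq g₁ + LL 𝒰 μseq g₂ := add_le_add h1 h2
    _ = LL 𝒰 μseq (g₁ + g₂) := (LL_add 𝒰 μseq g₁ g₂).symm
    _ = LL 𝒰 μseq h := by rw [hsum]

/-- the content. -/
noncomputable def cont : Content X where
  toFun K := (lamK 𝒰 μseq K).toNNReal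
  mono' K₁ K₂ h := ENNReal.toNNReal_mono (lt_of_le_of_lt (lamK_le_one 𝒰 μseq _) ENNReal.one_lt_top).ne
    (lamK_mono 𝒰 μseq h)
  sup_disjoint' K₁ K₂ hd h₁ h₂ := by
    have := lamK_sup_disjoint 𝒰 μseq K₁ K₂ h₁ h₂ hd
    simp only [Compacts.coe_sup]
    rw [← ENNReal.toNNReal_add (lt_of_le_of_lt (lamK_le_one 𝒰 μseq _) ENNReal.one_lt_top).ne
      (lt_of_le_of_lt (lamK_le_one 𝒰 μseq _) ENNReal.one_lt_top).ne, ← this]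
  sup_le' K₁ K₂ := by
    have h := lamK_union_le 𝒰 μseq K₁ K₂
    have : ((lamK 𝒰 μseq (↑K₁ ∪ ↑K₂)).toNNReal : ℝ≥0∞) ≤
        ((lamK 𝒰 μseq K₁).toNNReal + (lamK 𝒰 μseq K₂).toNNReal : ℝ≥0) := by
      rw [ENNReal.coe_toNNReal (lt_of_le_of_lt (lamK_le_one 𝒰 μseq _) ENNReal.one_lt_top).ne]
      push_cast
      rw [ENNReal.coe_toNNReal (lt_of_le_of_lt (lamK_le_one 𝒰 μseq _) ENNReal.one_lt_top).ne,
        ENNReal.coe_toNNReal (lt_of_le_of_lt (lamK_le_one 𝒰 μseq _) ENNReal.one_lt_top).ne]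
      exact h
    exact_mod_cast this

lemma cont_coe (K : Compacts X) : ((cont 𝒰 μseq) K : ℝ≥0∞) = lamK 𝒰 μseq K := by
  simp only [Content.mk_apply, cont]
  exact ENNReal.coe_toNNReal (lt_of_le_of_lt (lamK_le_one 𝒰 μseq _) ENNReal.one_lt_top).ne


/-- The limit measure. -/
noncomputable def μ0 : Measure X := (cont 𝒰 μseq).measure

lemma μ0_univ : μ0 𝒰 μseq univ = 1 := by
  rw [μ0, Content.measure_apply _ MeasurableSet.univ,
    Content.outerMeasure_of_isOpen _ univ isOpen_univ,
    Content.innerContent_of_isCompact _ isCompact_univ isOpen_univ]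
  have : ((cont 𝒰 μseq) ⟨univ, isCompact_univ⟩ : ℝ≥0∞) = lamK 𝒰 μseq univ := cont_coe _ _ _
  rw [this]
  refine le_antisymm (lamK_le_one 𝒰 μseq univ) ?_
  refine le_lamK 𝒰 μseq fun h hh => ?_
  calc (1:ℝ≥0∞) = LL 𝒰 μseq 1 := (LL_one 𝒰 μseq).symm
    _ ≤ LL 𝒰 μseq h := LL_mono 𝒰 μseq fun x => by simpa using hh x (mem_univ x)

instance : IsProbabilityMeasure (μ0 𝒰 μseq) := ⟨μ0_univ 𝒰 μseq⟩

lemma exists_bcf_bound (h : X →ᵇ ℝ≥0) : ∃ C : ℝ≥0, ∀ x, h x ≤ C := by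
  obtain ⟨x0, -, hx0⟩ := isCompact_univ.exists_isMaxOn univ_nonempty h.continuous.continuousOn
  exact ⟨h x0, fun x => hx0 (mem_univ x)⟩

lemma LL_le_lintegral (h : X →ᵇ ℝ≥0) :
    LL 𝒰 μseq h ≤ ∫⁻ x, h x ∂(μ0 𝒰 μseq) := by
  refine ENNReal.le_of_forall_pos_le_add fun ε hε _ => ?_
  set μ := μ0 𝒰 μseq
  set δ : ℝ≥0 := ε / 2 with hδdef
  have hδ : 0 < δ := by positivity
  -- choose N
  obtain ⟨C, hC⟩ := exists_bcf_bound h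
  obtain ⟨N, hNgt⟩ := exists_nat_gt (C / δ)
  have hNpos : 0 < N := by
    have h0 : (0 : ℝ≥0) < N := lt_of_le_of_lt zero_le hNgt
    exact_mod_cast h0
  have hhx_lt : ∀ x : X, h x < (N : ℝ≥0) * δ := by
    intro x
    calc h x ≤ C := hC x
      _ < N * δ := by rwa [div_lt_iff₀ hδ] at hNgt
  -- the cells
  set E : ℕ → Set X := fun i => (⇑h) ⁻¹' (Ico ((i : ℝ≥0) * δ) (((i : ℕ) + 1 : ℕ) * δ)) with hE
  have hEmeas : ∀ i, MeasurableSet (E i) :=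
    fun i => h.continuous.measurable (measurableSet_Ico)
  have hkey : ∀ i j : ℕ, i < j → Disjoint (E i) (E j) := by
    intro i j hlt
    refine Set.disjoint_left.2 fun x hxi hxj => ?_
    have h1 : h x < ((i:ℕ) + 1 : ℕ) * δ := hxi.2
    have h2 : ((j : ℝ≥0)) * δ ≤ h x := hxj.1
    have h3 : ((i:ℕ) + 1 : ℝ≥0) ≤ (j : ℝ≥0) := by exact_mod_cast Nat.succ_le_of_lt hlt
    have h4 : (((i:ℕ) + 1 : ℕ) : ℝ≥0) * δ ≤ (j : ℝ≥0) * δ := by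
      push_cast
      exact mul_le_mul_left h3 δ
    exact absurd (h1.trans_le (h4.trans h2)) (lt_irrefl _)
  have hEdis : Pairwise (Function.onFun Disjoint E) := by
    intro i j hij
    rcases lt_or_gt_of_ne hij with hlt | hlt
    · exact hkey i j hlt
    · exact (hkey j i hlt).symm
  have hmemE : ∀ x : X, ∃ i : ℕ, i < N ∧ x ∈ E i := by
    intro x
    refine ⟨⌊h x / δ⌋₊, ?_, ?_, ?_⟩
    · have h1 : (⌊h x / δ⌋₊ : ℝ≥0) ≤ h x / δ := Nat.floor_le zero_le
      have h2 : h x / δ < N := by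
        rw [div_lt_iff₀ hδ]
        exact hhx_lt x
      exact_mod_cast h1.trans_lt h2
    · rw [← le_div_iff₀ hδ]
      exact Nat.floor_le zero_le
    · push_cast
      rw [← div_lt_iff₀ hδ]
      exact Nat.lt_floor_add_one _
  have hcover : ⋃ i : Fin N, E i = univ := by
    refine eq_univ_of_forall fun x => ?_
    obtain ⟨i, hiN, hxi⟩ := hmemE x
    exact mem_iUnion.2 ⟨⟨i, hiN⟩, hxi⟩
  -- the approximating open sets
  set ε' : ℝ≥0∞ := (δ : ℝ≥0∞) / ((N : ℝ≥0∞) * ((N : ℝ≥0∞) * δ)) with hε'def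
  have hN0' : (N : ℝ≥0∞) ≠ 0 := Nat.cast_ne_zero.2 hNpos.ne'
  have hδ0' : (δ : ℝ≥0∞) ≠ 0 := ENNReal.coe_ne_zero.2 hδ.ne'
  have hden0 : ((N : ℝ≥0∞) * ((N : ℝ≥0∞) * δ)) ≠ 0 :=
    mul_ne_zero hN0' (mul_ne_zero hN0' hδ0')
  have hdentop : ((N : ℝ≥0∞) * ((N : ℝ≥0∞) * δ)) ≠ ∞ := by
    exact ENNReal.mul_ne_top (ENNReal.natCast_ne_top N)
      (ENNReal.mul_ne_top (ENNReal.natCast_ne_top N) ENNReal.coe_ne_top)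
  have hε'0 : ε' ≠ 0 := by
    rw [hε'def]
    simp [ENNReal.div_eq_zero_iff, hδ.ne', hdentop]
  have hUex : ∀ i : ℕ, ∃ U : Set X, IsOpen U ∧ E i ⊆ U ∧
      (∀ x ∈ U, h x < ((i : ℕ) + 1 : ℕ) * δ) ∧ μ U ≤ μ (E i) + ε' := by
    intro i
    obtain ⟨V, hEV, hVopen, hVμ⟩ := Set.exists_isOpen_lt_add (E i) (measure_ne_top μ _) hε'0
    refine ⟨V ∩ (⇑h) ⁻¹' (Iio (((i : ℕ) + 1 : ℕ) * δ)), hVopen.inter (isOpen_Iio.preimage h.continuous),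
      fun x hx => ⟨hEV hx, hx.2⟩, fun x hx => hx.2, ?_⟩
    exact le_trans (measure_mono inter_subset_left) hVμ.le
  choose U hUopen hEU hUlt hUμ using hUex
  -- partition of unity
  have hcov' : (univ : Set X) ⊆ ⋃ i : Fin N, U i := by
    rw [← hcover]
    exact iUnion_mono fun i => hEU i
  obtain ⟨φ, hφsupp, hφsum, hφI, -⟩ :=
    exists_continuous_sum_one_of_isOpen_isCompact (fun i : Fin N => hUopen i)
      isCompact_univ hcov'
  set φnn : Fin N → (X →ᵇ ℝ≥0) := fun i => toNN (φ i) (fun x => hφI i x) with hφnn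
  set g : Fin N → (X →ᵇ ℝ≥0) := fun i => mkOfCompact ⟨fun x => φnn i x * h x,
    ((φnn i).continuous).mul h.continuous⟩ with hg
  have hgsum : ∑ i : Fin N, g i = h := by
    ext x
    rw [coe_sum, Finset.sum_apply]
    rw [NNReal.coe_sum]
    have h2 : ∑ i : Fin N, (φ i x : ℝ) = 1 := by
      have h1 := hφsum (mem_univ x)
      simpa using h1
    calc ∑ i : Fin N, ((g i x : ℝ≥0) : ℝ) = ∑ i : Fin N, (φ i x) * (h x : ℝ) := by
          refine Finset.sum_congr rfl fun i _ => ?_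
          show ((φnn i x * h x : ℝ≥0) : ℝ) = _
          rw [NNReal.coe_mul]
          rfl
      _ = (∑ i : Fin N, (φ i x : ℝ)) * h x := by rw [Finset.sum_mul]
      _ = h x := by rw [h2, one_mul]
  have step2 : ∀ i : Fin N, LL 𝒰 μseq (g i) ≤
      ((((i : ℕ) + 1 : ℕ) * δ : ℝ≥0) : ℝ≥0∞) * LL 𝒰 μseq (φnn i) := by
    intro i
    rw [← LL_smul]
    refine LL_mono 𝒰 μseq fun x => ?_
    by_cases hx : x ∈ tsupport (φ i)
    · have hxU : x ∈ U i := hφsupp i hx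
      have : h x ≤ (((i : ℕ) + 1 : ℕ) * δ : ℝ≥0) := (hUlt i x hxU).le
      calc (g i) x = φnn i x * h x := rfl
        _ ≤ φnn i x * ((((i : ℕ) + 1 : ℕ)) * δ) := mul_le_mul_right this _
        _ = ((((i : ℕ) + 1 : ℕ) * δ : ℝ≥0) • φnn i) x := by
            simp [mul_comm]
    · have h0 : φ i x = 0 := image_eq_zero_of_notMem_tsupport hx
      have h0' : φnn i x = 0 := by
        rw [← NNReal.coe_inj]; simp [hφnn, h0]
      have : (g i) x = 0 := by simp [hg, h0']
      rw [this]
      exact zero_le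
  have step3 : ∀ i : Fin N, LL 𝒰 μseq (φnn i) ≤ μ (U i) := by
    intro i
    have hKc : IsCompact (tsupport (φ i)) := (isClosed_tsupport _).isCompact
    have h1 : LL 𝒰 μseq (φnn i) ≤ lamK 𝒰 μseq (tsupport (φ i)) := by
      refine le_lamK 𝒰 μseq fun t ht => ?_
      refine LL_mono 𝒰 μseq fun x => ?_
      by_cases hx : x ∈ tsupport (φ i)
      · exact le_trans (toNN_le_one _ _ x) (ht x hx)
      · have h0 : φ i x = 0 := image_eq_zero_of_notMem_tsupport hx
        have h0' : φnn i x = 0 := by rw [← NNReal.coe_inj]; simp [hφnn, h0]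
        rw [h0']; exact zero_le
    have h2 : lamK 𝒰 μseq (tsupport (φ i)) ≤ μ (U i) := by
      have hm : μ (U i) = (cont 𝒰 μseq).outerMeasure (U i) :=
        Content.measure_apply _ (hUopen i).measurableSet
      rw [hm, Content.outerMeasure_of_isOpen _ _ (hUopen i)]
      have h5 := Content.le_innerContent (cont 𝒰 μseq) ⟨tsupport (φ i), hKc⟩
        ⟨U i, hUopen i⟩ (hφsupp i)
      calc lamK 𝒰 μseq (tsupport (φ i))
          = ((cont 𝒰 μseq) ⟨tsupport (φ i), hKc⟩ : ℝ≥0∞) := (cont_coe 𝒰 μseq ⟨tsupport (φ i), hKc⟩).symm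
        _ ≤ _ := h5
    exact h1.trans h2
  -- put everything together
  have hsum1 : (∑ i : Fin N, μ (E i)) = 1 := by
    have hd : ((Finset.univ : Finset (Fin N)) : Set (Fin N)).PairwiseDisjoint (fun i : Fin N => E i) := by
      intro i _ j _ hij
      exact hEdis (fun hc => hij (Fin.ext hc))
    have hb := measure_biUnion_finset (μ := μ) hd (fun i _ => hEmeas i)
    rw [← hb]
    have : ⋃ b ∈ (Finset.univ : Finset (Fin N)), E ↑b = univ := by
      simp only [Finset.mem_univ, iUnion_true]
      exact hcover
    rw [this]
    exact μ0_univ 𝒰 μseq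
  have hA : (∑ i : Fin N, (((i : ℕ) * δ : ℝ≥0) : ℝ≥0∞) * μ (E i)) ≤ ∫⁻ x, h x ∂μ := by
    calc (∑ i : Fin N, (((i : ℕ) * δ : ℝ≥0) : ℝ≥0∞) * μ (E i))
        = ∑ i : Fin N, ∫⁻ x in E i, (((i : ℕ) * δ : ℝ≥0) : ℝ≥0∞) ∂μ := by
          refine Finset.sum_congr rfl fun i _ => ?_
          rw [setLIntegral_const]
      _ ≤ ∑ i : Fin N, ∫⁻ x in E i, (h x : ℝ≥0∞) ∂μ := by
          refine Finset.sum_le_sum fun i _ => ?_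
          refine setLIntegral_mono (meas_coe h) fun x hx => ?_
          exact ENNReal.coe_le_coe.2 hx.1
      _ = ∫⁻ x in ⋃ i ∈ (Finset.univ : Finset (Fin N)), E ↑i, (h x : ℝ≥0∞) ∂μ := by
          have hd : ((Finset.univ : Finset (Fin N)) : Set (Fin N)).PairwiseDisjoint (fun i : Fin N => E i) :=
            fun i _ j _ hij => hEdis (fun hc => hij (Fin.ext (by exact_mod_cast hc)))
          exact (lintegral_biUnion_finset (μ := μ) hd (fun i _ => hEmeas i)
            (fun x => (h x : ℝ≥0∞))).symm
      _ = ∫⁻ x, h x ∂μ := by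
          have : ⋃ b ∈ (Finset.univ : Finset (Fin N)), E ↑b = univ := by
            simp only [Finset.mem_univ, iUnion_true]
            exact hcover
          rw [this, setLIntegral_univ]
  have herr : (∑ i : Fin N, ((((i : ℕ) + 1 : ℕ) * δ : ℝ≥0) : ℝ≥0∞) * ε') ≤ δ := by
    calc (∑ i : Fin N, ((((i : ℕ) + 1 : ℕ) * δ : ℝ≥0) : ℝ≥0∞) * ε')
        ≤ ∑ _i : Fin N, ((N : ℝ≥0∞) * δ) * ε' := by
          refine Finset.sum_le_sum fun i _ => ?_
          refine mul_le_mul_left ?_ ε'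
          push_cast
          refine mul_le_mul_left ?_ (δ : ℝ≥0∞)
          exact_mod_cast Nat.cast_le.2 (by omega : (i : ℕ) + 1 ≤ N)
      _ = (N : ℝ≥0∞) * ((N : ℝ≥0∞) * δ) * ε' := by
          rw [Finset.sum_const, Finset.card_univ, Fintype.card_fin, nsmul_eq_mul]
          ring
      _ = δ := by
          rw [hε'def, ENNReal.mul_div_cancel hden0 hdentop]
  calc LL 𝒰 μseq h = ∑ i : Fin N, LL 𝒰 μseq (g i) := by rw [← hgsum, LL_sum]
    _ ≤ ∑ i : Fin N, ((((i : ℕ) + 1 : ℕ) * δ : ℝ≥0) : ℝ≥0∞) * LL 𝒰 μseq (φnn i) :=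
        Finset.sum_le_sum fun i _ => step2 i
    _ ≤ ∑ i : Fin N, ((((i : ℕ) + 1 : ℕ) * δ : ℝ≥0) : ℝ≥0∞) * (μ (E i) + ε') :=
        Finset.sum_le_sum fun i _ => mul_le_mul_right ((step3 i).trans (hUμ i)) _
    _ = ∑ i : Fin N, ((((i : ℕ) * δ : ℝ≥0) : ℝ≥0∞) * μ (E i) + (δ : ℝ≥0∞) * μ (E i)
          + ((((i : ℕ) + 1 : ℕ) * δ : ℝ≥0) : ℝ≥0∞) * ε') := by
        refine Finset.sum_congr rfl fun i _ => ?_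
        rw [mul_add]
        congr 1
        push_cast
        ring
    _ = (∑ i : Fin N, (((i : ℕ) * δ : ℝ≥0) : ℝ≥0∞) * μ (E i))
          + (δ : ℝ≥0∞) * (∑ i : Fin N, μ (E i))
          + ∑ i : Fin N, ((((i : ℕ) + 1 : ℕ) * δ : ℝ≥0) : ℝ≥0∞) * ε' := by
        rw [Finset.sum_add_distrib, Finset.sum_add_distrib, Finset.mul_sum]
    _ ≤ ∫⁻ x, h x ∂μ + (δ : ℝ≥0∞) * 1 + (δ : ℝ≥0∞) :=
        add_le_add (add_le_add hA (mul_le_mul_right hsum1.le _)) herr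
    _ = ∫⁻ x, h x ∂μ + ε := by
        rw [mul_one, add_assoc, ← ENNReal.coe_add]
        congr 2
        rw [hδdef]
        rw [← NNReal.coe_inj]
        push_cast
        ring


lemma lintegral_μ0_eq_LL (h : X →ᵇ ℝ≥0) :
    ∫⁻ x, h x ∂(μ0 𝒰 μseq) = LL 𝒰 μseq h := by
  obtain ⟨C, hC⟩ := exists_bcf_bound h
  set g : X →ᵇ ℝ≥0 := mkOfCompact ⟨fun x => C - h x,
    (continuous_const.sub h.continuous)⟩ with hgdef
  have hgh : ∀ x, g x + h x = C := fun x => tsub_add_cancel_of_le (hC x)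
  have hfin : ∫⁻ x, h x ∂(μ0 𝒰 μseq) ≤ C := by
    calc ∫⁻ x, (h x : ℝ≥0∞) ∂(μ0 𝒰 μseq) ≤ ∫⁻ _, (C : ℝ≥0∞) ∂(μ0 𝒰 μseq) :=
          lintegral_mono fun x => ENNReal.coe_le_coe.2 (hC x)
      _ = C := by simp
  have hgfin : ∫⁻ x, g x ∂(μ0 𝒰 μseq) ≤ C := by
    calc ∫⁻ x, (g x : ℝ≥0∞) ∂(μ0 𝒰 μseq) ≤ ∫⁻ _, (C : ℝ≥0∞) ∂(μ0 𝒰 μseq) :=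
          lintegral_mono fun x => ENNReal.coe_le_coe.2 (by
            calc g x ≤ g x + h x := le_self_add
              _ = C := hgh x)
      _ = C := by simp
  have hsum1 : ∫⁻ x, g x ∂(μ0 𝒰 μseq) + ∫⁻ x, h x ∂(μ0 𝒰 μseq) = C := by
    rw [← lintegral_add_left (meas_coe g)]
    calc ∫⁻ x, ((g x : ℝ≥0∞) + h x) ∂(μ0 𝒰 μseq) = ∫⁻ _, (C : ℝ≥0∞) ∂(μ0 𝒰 μseq) := by
          congr 1; ext x
          rw [← ENNReal.coe_add, hgh x]
      _ = C := by simp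
  have hghsum : g + h = (C • 1 : X →ᵇ ℝ≥0) := by
    ext x
    simp only [BoundedContinuousFunction.coe_add, Pi.add_apply]
    rw [hgh x]
    simp
  have hsum2 : LL 𝒰 μseq g + LL 𝒰 μseq h = C := by
    rw [← LL_add, hghsum, LL_const]
  have h1 := LL_le_lintegral 𝒰 μseq h
  have h2 := LL_le_lintegral 𝒰 μseq g
  refine le_antisymm ?_ h1
  by_contra hlt
  push_neg at hlt
  have : (C : ℝ≥0∞) < C := by
    calc (C : ℝ≥0∞) = LL 𝒰 μseq g + LL 𝒰 μseq h := hsum2.symm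
      _ < ∫⁻ x, g x ∂(μ0 𝒰 μseq) + ∫⁻ x, h x ∂(μ0 𝒰 μseq) :=
          ENNReal.add_lt_add_of_le_of_lt
            (((h2.trans hgfin).trans_lt ENNReal.coe_lt_top).ne) h2 hlt
      _ = C := hsum1
  exact absurd this (lt_irrefl _)

/-- Key compactness statement: every sequence of probability measures has an
ultrafilter weak* limit which is a probability measure. -/
theorem exists_lintegral_tendsto :
    ∃ ν : ProbabilityMeasure X, ∀ h : X →ᵇ ℝ≥0,
      Tendsto (fun n => ∫⁻ x, h x ∂(μseq n : Measure X)) 𝒰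
        (𝓝 (∫⁻ x, h x ∂(ν : Measure X))) := by
  refine ⟨⟨μ0 𝒰 μseq, inferInstance⟩, fun h => ?_⟩
  have h1 := tendsto_LL 𝒰 μseq h
  rw [← lintegral_μ0_eq_LL 𝒰 μseq h] at h1
  exact h1


lemma integrable_cm (f : C(X, ℝ)) (m : Measure X) [IsFiniteMeasure m] :
    Integrable (⇑f) m := by
  have := (mkOfCompact f).integrable m
  exact this

lemma abs_intf_le (f : C(X, ℝ)) (μ : ProbabilityMeasure X) : |intf f μ| ≤ ‖f‖ := by
  rw [intf, ← Real.norm_eq_abs]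
  have := norm_integral_le_of_norm_le_const (μ := (μ : Measure X)) (f := ⇑f) (C := ‖f‖)
    (Eventually.of_forall fun x => f.norm_coe_le_norm x)
  simpa using this

lemma bddAbove_intf (T : X → X) (f : C(X, ℝ)) : BddAbove (intf f '' Minv T) := by
  refine ⟨‖f‖, ?_⟩
  rintro b ⟨μ, -, rfl⟩
  exact (abs_le.1 (abs_intf_le f μ)).2

lemma intf_le_beta (T : X → X) (f : C(X, ℝ)) {μ : ProbabilityMeasure X} (hμ : μ ∈ Minv T) :
    intf f μ ≤ beta T f :=
  le_csSup (bddAbove_intf T f) ⟨μ, hμ, rfl⟩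

lemma intf_add (f g : C(X, ℝ)) (μ : ProbabilityMeasure X) :
    intf (f + g) μ = intf f μ + intf g μ := by
  rw [intf, intf, intf]
  have : ∫ x, (f + g) x ∂(μ : Measure X) = ∫ x, (f x + g x) ∂(μ : Measure X) := rfl
  rw [this, integral_add (integrable_cm f _) (integrable_cm g _)]

lemma intf_smul (τ : ℝ) (g : C(X, ℝ)) (μ : ProbabilityMeasure X) :
    intf (τ • g) μ = τ * intf g μ := by
  rw [intf, intf]
  have : ∫ x, (τ • g) x ∂(μ : Measure X) = ∫ x, τ * g x ∂(μ : Measure X) := rfl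
  rw [this]
  simp_rw [← smul_eq_mul]
  rw [integral_smul]

lemma beta_add_le (T : X → X) (hM : (Minv T).Nonempty) (f h : C(X, ℝ)) :
    beta T (f + h) ≤ beta T f + ‖h‖ := by
  refine csSup_le (hM.image _) ?_
  rintro b ⟨μ, hμ, rfl⟩
  rw [intf_add]
  exact add_le_add (intf_le_beta T f hμ) (abs_le.1 (abs_intf_le h μ)).2

/-- the key existence result: `MMax T f` is nonempty. -/
theorem mmax_nonempty (T : X → X) (hT : Continuous T) (hM : (Minv T).Nonempty)
    (f : C(X, ℝ)) : (MMax T f).Nonempty := by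
  obtain ⟨u, -, hu, humem⟩ := exists_seq_tendsto_sSup (hM.image (intf f)) (bddAbove_intf T f)
  choose μs hμs hval using humem
  set 𝒰 := Ultrafilter.of (atTop : Filter ℕ) with h𝒰def
  have h𝒰 : (𝒰 : Filter ℕ) ≤ atTop := Ultrafilter.of_le _
  obtain ⟨ν, hν⟩ := exists_lintegral_tendsto 𝒰 μs
  have hTm : Measurable T := hT.measurable
  -- ν is invariant
  have hinv : (ν : Measure X).map T = (ν : Measure X) := by
    have key : ∀ hb : X →ᵇ ℝ≥0,
        ∫⁻ x, hb x ∂(ν : Measure X) = ∫⁻ x, hb x ∂((ν : Measure X).map T) := by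
      intro hb
      rw [lintegral_map (meas_coe hb) hTm]
      set hbT : X →ᵇ ℝ≥0 := hb.compContinuous ⟨T, hT⟩ with hbTdef
      have hbTcoe : ∀ x, (hb (T x) : ℝ≥0∞) = hbT x := fun x => rfl
      have heq : ∀ n, ∫⁻ x, hbT x ∂(μs n : Measure X) = ∫⁻ x, hb x ∂(μs n : Measure X) := by
        intro n
        have h1 : ∫⁻ x, hb x ∂((μs n : Measure X).map T)
            = ∫⁻ x, (hb (T x) : ℝ≥0∞) ∂(μs n : Measure X) := lintegral_map (meas_coe hb) hTm
        rw [hμs n] at h1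
        exact h1.symm
      have t1 := hν hbT
      have t2 := hν hb
      simp_rw [heq] at t1
      have := tendsto_nhds_unique t1 t2
      calc ∫⁻ x, (hb x : ℝ≥0∞) ∂(ν : Measure X)
          = ∫⁻ x, (hbT x : ℝ≥0∞) ∂(ν : Measure X) := this.symm
        _ = ∫⁻ x, (hb (T x) : ℝ≥0∞) ∂(ν : Measure X) := rfl
    exact (ext_of_forall_lintegral_eq_of_IsFiniteMeasure key).symm
  -- ν is maximizing
  have hmax : intf f ν = beta T f := by
    set c : ℝ := ‖f‖ with hc
    have hfc_cont : Continuous fun x => Real.toNNReal (f x + c) :=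
      continuous_real_toNNReal.comp (f.continuous.add continuous_const)
    set fc : X →ᵇ ℝ≥0 := mkOfCompact ⟨fun x => Real.toNNReal (f x + c), hfc_cont⟩ with hfcdef
    have hfc_coe : ∀ x, ((fc x : ℝ≥0) : ℝ≥0∞) = ENNReal.ofReal (f x + c) := fun x => rfl
    have hnn : ∀ x, 0 ≤ f x + c := fun x => by
      have h2 : |f x| ≤ ‖f‖ := by
        rw [← Real.norm_eq_abs]
        exact f.norm_coe_le_norm x
      have h3 := neg_abs_le (f x)
      simp only [hc]
      linarith
    have key : ∀ m : ProbabilityMeasure X,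
        ∫⁻ x, fc x ∂(m : Measure X) = ENNReal.ofReal (intf f m + c) := by
      intro m
      have hmble : AEStronglyMeasurable (fun x => f x + c) (m : Measure X) :=
        ((f.continuous.add continuous_const)).aestronglyMeasurable
      have hint := MeasureTheory.integral_eq_lintegral_of_nonneg_ae
        (Eventually.of_forall hnn) hmble
      have hintadd : ∫ x, (f x + c) ∂(m : Measure X) = intf f m + c := by
        rw [integral_add (integrable_cm f _) (integrable_const c)]
        simp [intf]
      obtain ⟨K, hK⟩ := exists_bcf_bound fc
      have hfin : ∫⁻ x, fc x ∂(m : Measure X) ≠ ∞ := by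
        refine ne_of_lt (lt_of_le_of_lt ?_ (ENNReal.coe_lt_top (r := K)))
        calc ∫⁻ x, (fc x : ℝ≥0∞) ∂(m : Measure X) ≤ ∫⁻ _, (K : ℝ≥0∞) ∂(m : Measure X) :=
              lintegral_mono fun x => ENNReal.coe_le_coe.2 (hK x)
          _ = K := by simp
      rw [hintadd] at hint
      have : ∫⁻ x, (fc x : ℝ≥0∞) ∂(m : Measure X)
          = ∫⁻ x, ENNReal.ofReal (f x + c) ∂(m : Measure X) := by
        congr 1
      rw [this] at hfin ⊢
      rw [hint, ENNReal.ofReal_toReal hfin]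
    -- limits
    have hτ : Tendsto (fun n => ∫⁻ x, fc x ∂(μs n : Measure X)) atTop
        (𝓝 (ENNReal.ofReal (beta T f + c))) := by
      have h1 : Tendsto (fun n => intf f (μs n) + c) atTop (𝓝 (beta T f + c)) := by
        have : Tendsto (fun n => intf f (μs n)) atTop (𝓝 (beta T f)) := by
          have : (fun n => intf f (μs n)) = u := funext hval
          rw [this]
          exact hu
        exact this.add tendsto_const_nhds
      have h2 := (ENNReal.continuous_ofReal.tendsto _).comp h1
      simp_rw [key]
      exact h2
    have := tendsto_nhds_unique (hν fc) (hτ.mono_left h𝒰)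
    rw [key ν] at this
    have hβc : 0 ≤ beta T f + c := by
      have h0 : intf f (μs 0) ≤ beta T f := intf_le_beta T f (hμs 0)
      have h1 : -c ≤ intf f (μs 0) := (abs_le.1 (abs_intf_le f (μs 0))).1
      linarith
    have hνc : 0 ≤ intf f ν + c := by
      have h1 : -c ≤ intf f ν := (abs_le.1 (abs_intf_le f ν)).1
      linarith
    have := (ENNReal.ofReal_eq_ofReal_iff hνc hβc).1 this
    linarith
  exact ⟨ν, hinv, hmax⟩


end BetaAux

end BetaAuxSection

open BetaAux Set in
/-- One-sided derivative bounds for `β`: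
`liminf_{τ→0⁺} (β(f+τg)−β(f))/τ ≥ sup_{μ ∈ M_max(f)} ∫ g dμ` and
`limsup_{τ→0⁻} (β(f+τg)−β(f))/τ ≤ inf_{μ ∈ M_max(f)} ∫ g dμ`. -/

theorem beta_one_sided_derivative_bounds (T : X → X) (hT : Continuous T)
    (hM : (Minv T).Nonempty) (f g : C(X, ℝ)) :
    sSup (intf g '' MMax T f) ≤
      liminf (fun τ : ℝ => (beta T (f + τ • g) - beta T f) / τ) (𝓝[>] 0) ∧
    limsup (fun τ : ℝ => (beta T (f + τ • g) - beta T f) / τ) (𝓝[<] 0) ≤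
      sInf (intf g '' MMax T f) := by
  have hMM := mmax_nonempty T hT hM f
  -- the fundamental inequality, valid for every τ and every maximizing μ
  have hfund : ∀ (μ : ProbabilityMeasure X), μ ∈ MMax T f → ∀ τ : ℝ,
      beta T f + intf g μ * τ ≤ beta T (f + τ • g) := by
    intro μ hμ τ
    obtain ⟨hμinv, hμmax⟩ := hμ
    have h1 : intf (f + τ • g) μ ≤ beta T (f + τ • g) := intf_le_beta T _ hμinv
    rw [intf_add, intf_smul, hμmax] at h1
    linarith [h1]
  -- Lipschitz-type upper bound
  have hlip : ∀ τ : ℝ, beta T (f + τ • g) - beta T f ≤ |τ| * ‖g‖ := by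
    intro τ
    have := beta_add_le T hM f (τ • g)
    have hn : ‖τ • g‖ = |τ| * ‖g‖ := by
      have := norm_smul τ g
      rwa [Real.norm_eq_abs] at this
    linarith
  constructor
  · refine csSup_le (hMM.image _) ?_
    rintro b ⟨μ, hμ, rfl⟩
    refine le_liminf_of_le (isCoboundedUnder_ge_of_eventually_le _ (x := ‖g‖) ?_) ?_
    · filter_upwards [self_mem_nhdsWithin] with τ (hτ : τ ∈ Ioi (0:ℝ))
      have hτ0 : (0:ℝ) < τ := hτ
      rw [div_le_iff₀ hτ0]
      have := hlip τ
      rw [abs_of_pos hτ0] at this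
      linarith
    · filter_upwards [self_mem_nhdsWithin] with τ (hτ : τ ∈ Ioi (0:ℝ))
      have hτ0 : (0:ℝ) < τ := hτ
      rw [le_div_iff₀ hτ0]
      have := hfund μ hμ τ
      linarith
  · refine le_csInf (hMM.image _) ?_
    rintro b ⟨μ, hμ, rfl⟩
    refine limsup_le_of_le (isCoboundedUnder_le_of_eventually_le _ (x := -‖g‖) ?_) ?_
    · filter_upwards [self_mem_nhdsWithin] with τ (hτ : τ ∈ Iio (0:ℝ))
      have hτ0 : τ < 0 := hτ
      rw [le_div_iff_of_neg hτ0]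
      have := hlip τ
      rw [abs_of_neg hτ0] at this
      linarith
    · filter_upwards [self_mem_nhdsWithin] with τ (hτ : τ ∈ Iio (0:ℝ))
      have hτ0 : τ < 0 := hτ
      rw [div_le_iff_of_neg hτ0]
      have := hfund μ hμ τ
      linarith
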